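/- Any one-point extension of a Ramsey algebra is a Ramsey algebra: if (A, F) is Ramsey, α ∉ A, and F' is any family of operations on A ∪ {α} such that each f' ∈ F' restricted to A equals some f ∈ F (bijectively), then (A ∪ {α}, F') is a Ramsey algebra. -/

import Mathlib

namespace RamseyAlg

/- Orderly-term syntax trees over an operation-index type `ι`:
`leaf` is the identity (a single variable), `node g f` applies the basic
operation `g` to the results of the trees in the forest `f`. -/
mutual
  inductive OTree (ι : Type) : Type
    | leaf : OTree ι
    | node : ι → OForest ι → OTree ι
  inductive OForest (ι : Type) : Type
    | nil : OForest ι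
    | cons : OTree ι → OForest ι → OForest ι
end

def OForest.length {ι : Type} : OForest ι → ℕ
  | .nil => 0
  | .cons _ f => f.length + 1

/- Well-formedness: each node applies a `k`-ary basic operation to exactly
`k` subtrees, where `ar` gives the arities. -/
mutual
  def OTree.WF {ι : Type} (ar : ι → ℕ) : OTree ι → Prop
    | .leaf => True
    | .node g f => OForest.length f = ar g ∧ OForest.WF ar f
  def OForest.WF {ι : Type} (ar : ι → ℕ) : OForest ι → Prop
    | .nil => True
    | .cons t f => OTree.WF ar t ∧ OForest.WF ar f
end

/- Evaluation of an orderly term on an input list: the variables of the term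
consume an initial segment of the list, in order, each exactly once; what
remains of the list is returned alongside the value. -/
mutual
  def OTree.evalAux {ι A : Type} (F : ι → List A → A) :
      OTree ι → List A → Option (A × List A)
    | .leaf, [] => none
    | .leaf, a :: rest => some (a, rest)
    | .node g f, l =>
      match OForest.evalAux F f l with
      | none => none
      | some (rs, rest) => some (F g rs, rest)
  def OForest.evalAux {ι A : Type} (F : ι → List A → A) :
      OForest ι → List A → Option (List A × List A)
    | .nil, l => some ([], l)
    | .cons t f, l =>
      match OTree.evalAux F t l with
      | none => none
      | some (r, rest) =>
        match OForest.evalAux F f rest with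
        | none => none
        | some (rs, rest') => some (r :: rs, rest')
end

/- The value of the orderly term `t` on the finite sequence `l`, defined
exactly when the variables of `t` consume all of `l`. -/
def OTree.eval {ι A : Type} (F : ι → List A → A) (t : OTree ι) (l : List A) :
    Option A :=
  match OTree.evalAux F t l with
  | some (a, []) => some a
  | _ => none

/- `Reduction ar F a b` : `a` is a reduction of `b` with respect to `F`, i.e.
there are well-formed orderly terms `t j` applied to consecutive disjoint
finite subsequences of `b` (extracted by the strictly monotone `e`, in blocks
of lengths `len j`) producing the terms of `a` in order. -/
def Reduction {ι A : Type} (ar : ι → ℕ) (F : ι → List A → A)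
    (a b : ℕ → A) : Prop :=
  ∃ (t : ℕ → OTree ι) (len : ℕ → ℕ) (e : ℕ → ℕ),
    StrictMono e ∧ (∀ j, (t j).WF ar) ∧
    ∀ j, (t j).eval F ((List.range (len j)).map
        (fun i => b (e ((∑ m ∈ Finset.range j, len m) + i)))) = some (a j)

/- `FR ar F b` : the set of values of orderly terms over `F` applied to
finite subsequences of `b`. -/
def FR {ι A : Type} (ar : ι → ℕ) (F : ι → List A → A) (b : ℕ → A) : Set A :=
  { x | ∃ (t : OTree ι) (l : List ℕ), t.WF ar ∧ l.Chain' (· < ·) ∧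
      t.eval F (l.map b) = some x }

/- `(A, F)` is a Ramsey algebra: every infinite sequence has, for every
`X ⊆ A`, a reduction homogeneous for `X`. -/
def RamseyAlgebra {ι A : Type} (ar : ι → ℕ) (F : ι → List A → A) : Prop :=
  ∀ (b : ℕ → A) (X : Set A), ∃ a : ℕ → A,
    Reduction ar F a b ∧ (FR ar F a ⊆ X ∨ FR ar F a ∩ X = ∅)


end RamseyAlg



namespace RamseyAlg

variable {ι A : Type}

@[simp] theorem OTree.evalAux_leaf_nil (F : ι → List A → A) :
    OTree.evalAux F .leaf ([] : List A) = none := rfl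

@[simp] theorem OTree.evalAux_leaf_cons (F : ι → List A → A) (a : A) (l : List A) :
    OTree.evalAux F .leaf (a :: l) = some (a, l) := rfl

@[simp] theorem OTree.evalAux_node (F : ι → List A → A) (g : ι) (f : OForest ι)
    (l : List A) :
    OTree.evalAux F (.node g f) l
      = (OForest.evalAux F f l).map fun p => (F g p.1, p.2) := by
  cases h : OForest.evalAux F f l <;> simp [OTree.evalAux, h]

@[simp] theorem OForest.evalAux_nil (F : ι → List A → A) (l : List A) :
    OForest.evalAux F .nil l = some ([], l) := rfl

@[simp] theorem OForest.evalAux_cons (F : ι → List A → A) (t : OTree ι)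
    (f : OForest ι) (l : List A) :
    OForest.evalAux F (.cons t f) l
      = (OTree.evalAux F t l).bind fun p =>
          (OForest.evalAux F f p.2).map fun q => (p.1 :: q.1, q.2) := by
  cases ht : OTree.evalAux F t l with
  | none => simp [OForest.evalAux, ht]
  | some p =>
    cases hf : OForest.evalAux F f p.2 with
    | none => simp [OForest.evalAux, ht, hf]
    | some q => simp [OForest.evalAux, ht, hf]

mutual
  def OTree.subst : OTree ι → OTree ι → OTree ι
    | .leaf, u => u
    | .node g f, u => .node g (OForest.subst f u)
  def OForest.subst : OForest ι → OTree ι → OForest ι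
    | .nil, _ => .nil
    | .cons t f, u => .cons (OTree.subst t u) (OForest.subst f u)
end

theorem OForest.length_subst : ∀ (f : OForest ι) (u : OTree ι),
    (OForest.subst f u).length = f.length
  | .nil, _ => rfl
  | .cons t f, u => by
    simp [OForest.subst, OForest.length, OForest.length_subst f u]

mutual
  theorem OTree.WF_subst (ar : ι → ℕ) (u : OTree ι) (hu : u.WF ar) :
      ∀ t : OTree ι, t.WF ar → (OTree.subst t u).WF ar
    | .leaf, _ => hu
    | .node g f, hw =>
      ⟨by rw [OForest.length_subst]; exact hw.1, OForest.WF_subst ar u hu f hw.2⟩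
  theorem OForest.WF_subst (ar : ι → ℕ) (u : OTree ι) (hu : u.WF ar) :
      ∀ f : OForest ι, f.WF ar → (OForest.subst f u).WF ar
    | .nil, _ => trivial
    | .cons t f, hw => ⟨OTree.WF_subst ar u hu t hw.1, OForest.WF_subst ar u hu f hw.2⟩
end

theorem OForest.evalAux_length (F : ι → List A → A) :
    ∀ (f : OForest ι) (l : List A) rs rest,
      OForest.evalAux F f l = some (rs, rest) → rs.length = f.length
  | .nil, l, rs, rest => by
    intro h; simp at h; simp [h.1, OForest.length]
  | .cons t f, l, rs, rest => by
    intro h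
    simp only [OForest.evalAux_cons, Option.bind_eq_some_iff, Option.map_eq_some_iff] at h
    obtain ⟨⟨x, rest1⟩, ht, ⟨rs2, rest2⟩, hf, heq⟩ := h
    cases hiq : heq
    simp [OForest.length, OForest.evalAux_length F f rest1 rs2 rest2 hf]

mutual
  theorem OTree.evalAux_suffix (F : ι → List A → A) :
      ∀ (t : OTree ι) (l : List A) x rest,
        OTree.evalAux F t l = some (x, rest) → rest <:+ l
    | .leaf, l, x, rest => by
      cases l with
      | nil => intro h; simp at h
      | cons a l => intro h; simp at h; rw [← h.2]; exact List.suffix_cons a l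
    | .node g f, l, x, rest => by
      intro h
      simp only [OTree.evalAux_node, Option.map_eq_some_iff] at h
      obtain ⟨⟨rs, rest1⟩, hf, heq⟩ := h
      cases heq
      exact OForest.evalAux_suffix F f l rs rest1 hf
  theorem OForest.evalAux_suffix (F : ι → List A → A) :
      ∀ (f : OForest ι) (l : List A) rs rest,
        OForest.evalAux F f l = some (rs, rest) → rest <:+ l
    | .nil, l, rs, rest => by
      intro h; simp at h; rw [h.2]
    | .cons t f, l, rs, rest => by
      intro h
      simp only [OForest.evalAux_cons, Option.bind_eq_some_iff, Option.map_eq_some_iff] at h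
      obtain ⟨⟨x, rest1⟩, ht, ⟨rs2, rest2⟩, hf, heq⟩ := h
      cases heq
      exact (OForest.evalAux_suffix F f rest1 rs2 rest2 hf).trans
        (OTree.evalAux_suffix F t l x rest1 ht)
end

mutual
  theorem OTree.evalAux_append (F : ι → List A → A) :
      ∀ (t : OTree ι) (l : List A) x rest (r : List A),
        OTree.evalAux F t l = some (x, rest) →
        OTree.evalAux F t (l ++ r) = some (x, rest ++ r)
    | .leaf, l, x, rest, r => by
      cases l with
      | nil => intro h; simp at h
      | cons a l => intro h; simp at h ⊢; exact ⟨h.1, by rw [h.2]⟩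
    | .node g f, l, x, rest, r => by
      intro h
      simp only [OTree.evalAux_node, Option.map_eq_some_iff] at h ⊢
      obtain ⟨⟨rs, rest1⟩, hf, heq⟩ := h
      cases heq
      exact ⟨(rs, rest1 ++ r), OForest.evalAux_append F f l rs rest1 r hf, rfl⟩
  theorem OForest.evalAux_append (F : ι → List A → A) :
      ∀ (f : OForest ι) (l : List A) rs rest (r : List A),
        OForest.evalAux F f l = some (rs, rest) →
        OForest.evalAux F f (l ++ r) = some (rs, rest ++ r)
    | .nil, l, rs, rest, r => by
      intro h; simp at h ⊢; exact ⟨h.1, by rw [h.2]⟩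
    | .cons t f, l, rs, rest, r => by
      intro h
      simp only [OForest.evalAux_cons, Option.bind_eq_some_iff, Option.map_eq_some_iff] at h ⊢
      obtain ⟨⟨x, rest1⟩, ht, ⟨rs2, rest2⟩, hf, heq⟩ := h
      cases heq
      exact ⟨(x, rest1 ++ r), OTree.evalAux_append F t l x rest1 r ht,
        (rs2, rest2 ++ r), OForest.evalAux_append F f rest1 rs2 rest2 r hf, rfl⟩
end

section Ext

variable (F : ι → List A → A) (F' : ι → List (Option A) → Option A) (ar : ι → ℕ)

mutual
  theorem OTree.evalAux_map_some
      (hext : ∀ i (l : List A), l.length = ar i → F' i (l.map some) = some (F i l)) :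
      ∀ (t : OTree ι), t.WF ar → ∀ (l : List A),
      OTree.evalAux F' t (l.map some)
        = (OTree.evalAux F t l).map fun p => (some p.1, p.2.map some)
    | .leaf, _, l => by cases l <;> simp
    | .node g f, hw, l => by
      rw [OTree.evalAux_node, OTree.evalAux_node,
        OForest.evalAux_map_some hext f hw.2 l]
      cases hf : OForest.evalAux F f l with
      | none => simp
      | some p =>
        have hlen : p.1.length = ar g := by
          rw [OForest.evalAux_length F f l p.1 p.2 hf]; exact hw.1
        simp [hext g p.1 hlen]
  theorem OForest.evalAux_map_some
      (hext : ∀ i (l : List A), l.length = ar i → F' i (l.map some) = some (F i l)) :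
      ∀ (f : OForest ι), f.WF ar → ∀ (l : List A),
      OForest.evalAux F' f (l.map some)
        = (OForest.evalAux F f l).map fun p => (p.1.map some, p.2.map some)
    | .nil, _, l => by simp
    | .cons t f, hw, l => by
      rw [OForest.evalAux_cons, OForest.evalAux_cons,
        OTree.evalAux_map_some hext t hw.1 l]
      cases ht : OTree.evalAux F t l with
      | none => simp
      | some p =>
        simp only [Option.map_some, Option.bind_some]
        rw [OForest.evalAux_map_some hext f hw.2 p.2]
        cases hf : OForest.evalAux F f p.2 <;> simp
end

theorem OTree.eval_map_some
    (hext : ∀ i (l : List A), l.length = ar i → F' i (l.map some) = some (F i l))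
    (t : OTree ι) (hw : t.WF ar) (l : List A) :
    OTree.eval F' t (l.map some) = Option.map some (OTree.eval F t l) := by
  unfold OTree.eval
  rw [OTree.evalAux_map_some F F' ar hext t hw l]
  cases hx : OTree.evalAux F t l with
  | none => simp
  | some p =>
    obtain ⟨x, rest⟩ := p
    cases rest <;> simp

end Ext

section Subst

variable (F' : ι → List (Option A) → Option A) (t₀ : OTree ι) (n₀ : ℕ) (a₀ : A)

theorem suffix_replicate_eq {α : Type*} {l : List α} {n : ℕ} {a : α}
    (h : l <:+ List.replicate n a) : l = List.replicate l.length a ∧ l.length ≤ n := by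
  constructor
  · rw [List.eq_replicate_iff]
    exact ⟨rfl, fun b hb => List.eq_of_mem_replicate (h.subset hb)⟩
  · simpa using h.length_le

mutual
  theorem OTree.evalAux_subst
      (hu : ∀ r, OTree.evalAux F' t₀ (List.replicate n₀ none ++ r) = some (some a₀, r)) :
      ∀ (t : OTree ι) (k : ℕ) (x : Option A) (m : ℕ),
      OTree.evalAux F' t (List.replicate k (some a₀))
          = some (x, List.replicate m (some a₀)) →
      ∀ r, OTree.evalAux F' (OTree.subst t t₀)
          (List.replicate ((k - m) * n₀) none ++ r) = some (x, r)
    | .leaf, k, x, m => by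
      cases k with
      | zero => intro h; simp at h
      | succ k =>
        intro h r
        rw [List.replicate_succ, OTree.evalAux_leaf_cons] at h
        have h1 : x = some a₀ := by
          have := congrArg (fun o => (Option.map Prod.fst o)) h
          simp at this; exact this.symm
        have h2 : m = k := by
          have := congrArg (fun o => (Option.map (fun p => (Prod.snd p).length) o)) h
          simp at this; omega
        subst h1
        have hmk : (k + 1 - m) * n₀ = n₀ := by rw [h2]; simp
        rw [OTree.subst, hmk]
        exact hu r
    | .node g f, k, x, m => by
      intro h r
      simp only [OTree.evalAux_node, Option.map_eq_some_iff] at h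
      obtain ⟨⟨rs, rest1⟩, hf, heq⟩ := h
      have e1 : x = F' g rs := by cases heq; rfl
      have e2 : rest1 = List.replicate m (some a₀) := by cases heq; rfl
      subst e2
      rw [OTree.subst, OTree.evalAux_node,
        OForest.evalAux_subst hu f k rs m hf r]
      simp [e1]
  theorem OForest.evalAux_subst
      (hu : ∀ r, OTree.evalAux F' t₀ (List.replicate n₀ none ++ r) = some (some a₀, r)) :
      ∀ (f : OForest ι) (k : ℕ) (xs : List (Option A)) (m : ℕ),
      OForest.evalAux F' f (List.replicate k (some a₀))
          = some (xs, List.replicate m (some a₀)) →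
      ∀ r, OForest.evalAux F' (OForest.subst f t₀)
          (List.replicate ((k - m) * n₀) none ++ r) = some (xs, r)
    | .nil, k, xs, m => by
      intro h r
      simp only [OForest.evalAux_nil, Option.some_inj, Prod.mk.injEq] at h
      have hk : k = m := by
        have := congrArg List.length h.2; simpa using this
      rw [OForest.subst, ← h.1, hk]
      simp
    | .cons t f, k, xs, m => by
      intro h r
      simp only [OForest.evalAux_cons, Option.bind_eq_some_iff, Option.map_eq_some_iff] at h
      obtain ⟨⟨x, rest1⟩, ht, ⟨rs2, rest2⟩, hf, heq⟩ := h
      have e1 : xs = x :: rs2 := by cases heq; rfl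
      have e2 : rest2 = List.replicate m (some a₀) := by cases heq; rfl
      subst e1; subst e2
      obtain ⟨hr1, hm1⟩ := suffix_replicate_eq
        (OTree.evalAux_suffix F' t _ x rest1 ht)
      set m₁ := rest1.length with hm₁
      rw [hr1] at ht hf
      have hm2 : m ≤ m₁ := by
        have := (suffix_replicate_eq (OForest.evalAux_suffix F' f _ rs2 _ hf)).2
        simpa using this
      have hsplit : (k - m) * n₀ = (k - m₁) * n₀ + (m₁ - m) * n₀ := by
        have : k - m = (k - m₁) + (m₁ - m) := by omega
        rw [this, Nat.add_mul]
      rw [OForest.subst, OForest.evalAux_cons, hsplit, List.replicate_add,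
        List.append_assoc,
        OTree.evalAux_subst hu t k x m₁ ht]
      simp [OForest.evalAux_subst hu f m₁ rs2 m hf r]
end

end Subst


theorem OTree.eval_eq_some_iff (F : ι → List A → A) (t : OTree ι) (l : List A) (x : A) :
    OTree.eval F t l = some x ↔ OTree.evalAux F t l = some (x, []) := by
  unfold OTree.eval
  cases h : OTree.evalAux F t l with
  | none => simp
  | some p =>
    obtain ⟨y, rest⟩ := p
    cases rest <;> simp

theorem FR_some (F : ι → List A → A) (F' : ι → List (Option A) → Option A) (ar : ι → ℕ)
    (hext : ∀ i (l : List A), l.length = ar i → F' i (l.map some) = some (F i l))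
    (a : ℕ → A) :
    FR ar F' (fun n => some (a n)) ⊆ some '' FR ar F a := by
  rintro x ⟨t, l, hw, hc, he⟩
  have hm : l.map (fun n => some (a n)) = (l.map a).map some := by
    rw [List.map_map]; rfl
  rw [hm, OTree.eval_map_some F F' ar hext t hw] at he
  obtain ⟨y, hy, hxy⟩ := Option.map_eq_some_iff.mp he
  exact ⟨y, ⟨t, l, hw, hc, hy⟩, hxy⟩

theorem hom_lift (F : ι → List A → A) (F' : ι → List (Option A) → Option A) (ar : ι → ℕ)
    (hext : ∀ i (l : List A), l.length = ar i → F' i (l.map some) = some (F i l))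
    (a : ℕ → A) (X : Set (Option A))
    (hh : FR ar F a ⊆ {y | some y ∈ X} ∨ FR ar F a ∩ {y | some y ∈ X} = ∅) :
    FR ar F' (fun n => some (a n)) ⊆ X ∨ FR ar F' (fun n => some (a n)) ∩ X = ∅ := by
  rcases hh with hh | hh
  · left; intro x hx
    obtain ⟨y, hy, rfl⟩ := FR_some F F' ar hext a hx
    exact hh hy
  · right
    rw [Set.eq_empty_iff_forall_notMem] at hh ⊢
    rintro x ⟨hx1, hx2⟩
    obtain ⟨y, hy, rfl⟩ := FR_some F F' ar hext a hx1
    exact hh y ⟨hy, hx2⟩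

theorem exists_strictMono_none (b : ℕ → Option A)
    (hb : ∀ N, ∃ n, N ≤ n ∧ b n = none) :
    ∃ e : ℕ → ℕ, StrictMono e ∧ ∀ n, b (e n) = none := by
  classical
  obtain ⟨n0, -, hn0⟩ := hb 0
  have h' : ∀ N, ∃ n, N < n ∧ b n = none := fun N => by
    obtain ⟨n, hn, hbn⟩ := hb (N + 1); exact ⟨n, by omega, hbn⟩
  choose g hg1 hg2 using h'
  refine ⟨fun n => g^[n] n0, strictMono_nat_of_lt_succ fun n => ?_, fun n => ?_⟩
  · rw [Function.iterate_succ_apply']; exact hg1 _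
  · induction n with
    | zero => exact hn0
    | succ n _ =>
      show b (g^[n + 1] n0) = none
      rw [Function.iterate_succ_apply']; exact hg2 _

end RamseyAlg

open RamseyAlg in
/-- Any one-point extension of a Ramsey algebra is Ramsey: extend the
universe `A` by one new point (modelled by `Option A`, with `none` the new point
`α`), and let each operation `F' i` agree with `F i` on tuples from `A`, being
arbitrary on tuples involving `α`. If `(A, F)` is Ramsey then so is `(A ∪ {α}, F')`. -/
theorem stmt17 (ι A : Type) (ar : ι → ℕ) (F : ι → List A → A)
    (F' : ι → List (Option A) → Option A)
    (hext : ∀ i (l : List A), l.length = ar i → F' i (l.map some) = some (F i l))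
    (h : RamseyAlgebra ar F) : RamseyAlgebra ar F' := by
  intro b X
  classical
  by_cases hfin : ∃ N, ∀ n, N ≤ n → (b n).isSome
  · -- `none` occurs only finitely often
    obtain ⟨N, hN⟩ := hfin
    have hbc : ∀ n, b (N + n) = some ((b (N + n)).get (hN (N + n) (by omega))) :=
      fun n => (Option.some_get _).symm
    set c : ℕ → A := fun n => (b (N + n)).get (hN (N + n) (by omega)) with hc
    obtain ⟨a, ⟨t, len, e, he, hwf, hev⟩, hhom⟩ := h c {y | some y ∈ X}
    refine ⟨fun n => some (a n), ⟨t, len, fun n => N + e n, ?_, hwf, ?_⟩, ?_⟩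
    · intro i j hij; simpa using he hij
    · intro j
      have hl : ((List.range (len j)).map
            (fun i => b ((fun n => N + e n) ((∑ m ∈ Finset.range j, len m) + i))))
          = ((List.range (len j)).map
            (fun i => c (e ((∑ m ∈ Finset.range j, len m) + i)))).map some := by
        rw [List.map_map]
        refine List.map_congr_left fun i _ => ?_
        exact hbc _
      rw [hl, OTree.eval_map_some F F' ar hext (t j) (hwf j), hev j]
      rfl
    · exact hom_lift F F' ar hext a X hhom
  · -- `none` occurs infinitely often
    push_neg at hfin
    have hinf : ∀ N, ∃ n, N ≤ n ∧ b n = none := by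
      intro N
      obtain ⟨n, hn, hbn⟩ := hfin N
      exact ⟨n, hn, Option.not_isSome_iff_eq_none.mp hbn⟩
    obtain ⟨e, he, hbe⟩ := exists_strictMono_none b hinf
    by_cases hQ : ∃ (t₀ : OTree ι) (n₀ : ℕ) (a₀ : A), t₀.WF ar ∧
        OTree.eval F' t₀ (List.replicate n₀ none) = some (some a₀)
    · obtain ⟨t₀, n₀, a₀, hwf₀, hev₀⟩ := hQ
      have hu : ∀ r, OTree.evalAux F' t₀ (List.replicate n₀ none ++ r)
          = some (some a₀, r) := by
        intro r
        have h0 := (OTree.eval_eq_some_iff F' t₀ _ _).mp hev₀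
        simpa using OTree.evalAux_append F' t₀ _ _ [] r h0
      obtain ⟨a, ⟨s, len, e₁, he₁, hwf₁, hev₁⟩, hhom⟩ := h (fun _ => a₀) {y | some y ∈ X}
      refine ⟨fun n => some (a n), ⟨fun j => (s j).subst t₀, fun j => len j * n₀, e, he,
        fun j => OTree.WF_subst ar t₀ hwf₀ _ (hwf₁ j), ?_⟩, ?_⟩
      · intro j
        have hl : (List.range (len j * n₀)).map
              (fun i => b (e ((∑ m ∈ Finset.range j, len m * n₀) + i)))
            = List.replicate (len j * n₀) none := by
          refine List.eq_replicate_iff.mpr ⟨by simp, ?_⟩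
          intro x hx
          simp only [List.mem_map, List.mem_range] at hx
          obtain ⟨i, -, rfl⟩ := hx
          exact hbe _
        rw [hl, OTree.eval_eq_some_iff]
        have h2 : (List.range (len j)).map (fun _ => a₀) = List.replicate (len j) a₀ := by
          simp [List.map_const']
        have h3 : (s j).eval F (List.replicate (len j) a₀) = some (a j) := by
          have h3' := hev₁ j
          rwa [h2] at h3'
        have h4 := OTree.eval_map_some F F' ar hext (s j) (hwf₁ j) (List.replicate (len j) a₀)
        rw [h3, List.map_replicate] at h4
        have h5 := (OTree.eval_eq_some_iff F' (s j) _ _).mp h4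
        have h6 := OTree.evalAux_subst F' t₀ n₀ a₀ hu (s j) (len j) (some (a j)) 0
          (by simpa using h5) []
        simpa using h6
      · exact hom_lift F F' ar hext a X hhom
    · refine ⟨fun _ => none, ⟨fun _ => .leaf, fun _ => 1, e, he, fun _ => trivial, ?_⟩, ?_⟩
      · intro j
        rw [OTree.eval_eq_some_iff]
        simp [hbe]
      · have hsub : FR ar F' (fun _ => (none : Option A)) ⊆ {none} := by
          rintro x ⟨t, l, hw, hc, he'⟩
          cases x with
          | none => rfl
          | some y =>
            exfalso
            refine hQ ⟨t, l.length, y, hw, ?_⟩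
            rw [← he']
            congr 1
            simp [List.map_const']
        by_cases hnx : (none : Option A) ∈ X
        · left; intro x hx
          have := hsub hx
          simp only [Set.mem_singleton_iff] at this
          rw [this]; exact hnx
        · right
          rw [Set.eq_empty_iff_forall_notMem]
          rintro x ⟨hx1, hx2⟩
          have := hsub hx1
          simp only [Set.mem_singleton_iff] at this
          rw [this] at hx2
          exact hnx hx2
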